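/- For a positive integer $k$, suppose $f$ is a $C^{k+1}$ real-valued function on an interval $I \subset \mathbb{R}$ whose $k$-th derivative satisfies $|f^{(k)}(x)| \ge \eta > 0$ for all $x \in I$. Then there is a constant $C_k$ depending only on $k$ such that for all $\delta > 0$, $|\{x \in I : |f(x)| < \delta\}| \le C_k (\delta/\eta)^{1/k}$. -/

import Mathlib

open MeasureTheory Set

private lemma itdw_isOpen {n : ℕ} {f : ℝ → ℝ} {s : Set ℝ} (hs : IsOpen s) {x : ℝ} (hx : x ∈ s) :
    iteratedDerivWithin n f s x = iteratedDeriv n f x := by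
  unfold iteratedDerivWithin iteratedDeriv
  rw [iteratedFDerivWithin_of_isOpen n hs hx]

private lemma diam_vol {S : Set ℝ} {L : ℝ}
    (h : ∀ x ∈ S, ∀ y ∈ S, x ≤ y → y - x ≤ L) :
    volume S ≤ ENNReal.ofReal (2 * L) := by
  rcases S.eq_empty_or_nonempty with rfl | ⟨x₀, hx₀⟩
  · simp
  · have hS : S ⊆ Icc (x₀ - L) (x₀ + L) := by
      intro y hy
      rcases le_total x₀ y with hle | hle
      · have := h x₀ hx₀ y hy hle
        exact ⟨by linarith, by linarith⟩
      · have := h y hy x₀ hx₀ hle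
        exact ⟨by linarith, by linarith⟩
    calc volume S ≤ volume (Icc (x₀ - L) (x₀ + L)) := measure_mono hS
      _ = ENNReal.ofReal (2 * L) := by rw [Real.volume_Icc]; congr 1; ring

private lemma slope_dichotomy {g : ℝ → ℝ} {J : Set ℝ} (hJo : IsOpen J)
    (hJc : J.OrdConnected) {η : ℝ} (hη : 0 < η)
    (hg : ContinuousOn g J) (hgd : DifferentiableOn ℝ g J)
    (hg' : ContinuousOn (deriv g) J) (hlb : ∀ x ∈ J, η ≤ |deriv g x|) :
    (∀ x ∈ J, ∀ y ∈ J, x ≤ y → η * (y - x) ≤ g y - g x) ∨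
    (∀ x ∈ J, ∀ y ∈ J, x ≤ y → η * (y - x) ≤ g x - g y) := by
  have hconv : Convex ℝ J := convex_iff_ordConnected.2 hJc
  have key : ∀ h : ℝ → ℝ, ContinuousOn h J → DifferentiableOn ℝ h J →
      (∀ x ∈ J, η ≤ deriv h x) →
      ∀ x ∈ J, ∀ y ∈ J, x ≤ y → η * (y - x) ≤ h y - h x := by
    intro h hc hd hb
    exact hconv.mul_sub_le_image_sub_of_le_deriv hc
      (by rw [hJo.interior_eq]; exact hd) (by rw [hJo.interior_eq]; exact hb)
  have hsign : (∀ x ∈ J, η ≤ deriv g x) ∨ (∀ x ∈ J, deriv g x ≤ -η) := by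
    by_contra hcon
    push_neg at hcon
    obtain ⟨⟨a, ha, ha'⟩, ⟨b, hb, hb'⟩⟩ := hcon
    have ha2 : deriv g a ≤ -η := by
      have := hlb a ha; rcases abs_cases (deriv g a) with ⟨he, _⟩ | ⟨he, _⟩ <;> linarith
    have hb2 : η ≤ deriv g b := by
      have := hlb b hb; rcases abs_cases (deriv g b) with ⟨he, _⟩ | ⟨he, _⟩ <;> linarith
    have h0 : (0:ℝ) ∈ Icc (deriv g a) (deriv g b) := ⟨by linarith, by linarith⟩
    obtain ⟨c, hc, hc0⟩ := hJc.isPreconnected.intermediate_value ha hb hg' h0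
    have := hlb c hc
    rw [hc0] at this
    simp at this
    linarith
  rcases hsign with hpos | hneg
  · exact Or.inl (key g hg hgd hpos)
  · right
    intro x hx y hy hxy
    have h2 : η * (y - x) ≤ -g y - -g x := key (fun z => -g z) hg.neg hgd.neg
      (fun z hz => by simp only [deriv.fun_neg]; linarith [hneg z hz]) x hx y hy hxy
    linarith

private lemma small_set_vol {g : ℝ → ℝ} {J : Set ℝ} {η : ℝ} (hη : 0 < η)
    (hd : (∀ x ∈ J, ∀ y ∈ J, x ≤ y → η * (y - x) ≤ g y - g x) ∨
      (∀ x ∈ J, ∀ y ∈ J, x ≤ y → η * (y - x) ≤ g x - g y))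
    {σ : ℝ} :
    volume {x ∈ J | |g x| ≤ σ} ≤ ENNReal.ofReal (4 * σ / η) := by
  have h : ∀ x ∈ {x ∈ J | |g x| ≤ σ}, ∀ y ∈ {x ∈ J | |g x| ≤ σ}, x ≤ y →
      y - x ≤ 2 * σ / η := by
    intro x hx y hy hxy
    have hgx := abs_le.1 hx.2
    have hgy := abs_le.1 hy.2
    rw [le_div_iff₀ hη]
    rcases hd with hd | hd
    · have := hd x hx.1 y hy.1 hxy; nlinarith
    · have := hd x hx.1 y hy.1 hxy; nlinarith
  calc volume {x ∈ J | |g x| ≤ σ} ≤ ENNReal.ofReal (2 * (2 * σ / η)) := diam_vol h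
    _ = ENNReal.ofReal (4 * σ / η) := by congr 1; ring

private lemma contOn_itd {m : ℕ} {n : WithTop ℕ∞} {f : ℝ → ℝ} {J : Set ℝ} (hJ : IsOpen J)
    (hf : ContDiffOn ℝ n f J) (hmn : (m : WithTop ℕ∞) ≤ n) :
    ContinuousOn (iteratedDeriv m f) J :=
  (hf.continuousOn_iteratedDerivWithin hmn hJ.uniqueDiffOn).congr
    (fun x hx => (itdw_isOpen hJ hx).symm)

private lemma diffOn_itd {m : ℕ} {n : WithTop ℕ∞} {f : ℝ → ℝ} {J : Set ℝ} (hJ : IsOpen J)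
    (hf : ContDiffOn ℝ n f J) (hmn : (m : WithTop ℕ∞) < n) :
    DifferentiableOn ℝ (iteratedDeriv m f) J :=
  (hf.differentiableOn_iteratedDerivWithin hmn hJ.uniqueDiffOn).congr
    (fun x hx => (itdw_isOpen hJ hx).symm)

private def P (k : ℕ) : Prop :=
  ∃ C : ℝ, 0 < C ∧ ∀ (f : ℝ → ℝ) (J : Set ℝ) (η : ℝ), IsOpen J → J.OrdConnected → 0 < η →
    ContDiffOn ℝ (k + 1) f J → (∀ x ∈ J, η ≤ |iteratedDeriv k f x|) →
    ∀ δ : ℝ, 0 < δ →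
      volume {x ∈ J | |f x| < δ} ≤ ENNReal.ofReal (C * (δ / η) ^ (1 / (k:ℝ)))

private lemma openP : ∀ k : ℕ, 1 ≤ k → P k := by
  intro k hk
  induction k, hk using Nat.le_induction with
  | base =>
    refine ⟨4, by norm_num, ?_⟩
    intro f J η hJo hJc hη hf hlb δ hδ
    have hlb' : ∀ x ∈ J, η ≤ |deriv f x| := by
      intro x hx
      have := hlb x hx
      rwa [iteratedDeriv_one] at this
    have hfc : ContinuousOn f J := hf.continuousOn
    have hfd : DifferentiableOn ℝ f J := by
      have := diffOn_itd (m := 0) hJo hf (by norm_num)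
      rwa [iteratedDeriv_zero] at this
    have hf'c : ContinuousOn (deriv f) J := by
      have := contOn_itd (m := 1) hJo hf (by norm_num)
      rwa [iteratedDeriv_one] at this
    have hd := slope_dichotomy hJo hJc hη hfc hfd hf'c hlb'
    calc volume {x ∈ J | |f x| < δ} ≤ volume {x ∈ J | |f x| ≤ δ} :=
          measure_mono (fun x hx => ⟨hx.1, hx.2.le⟩)
      _ ≤ ENNReal.ofReal (4 * δ / η) := small_set_vol hη hd
      _ = ENNReal.ofReal (4 * (δ / η) ^ (1 / ((1:ℕ):ℝ))) := by
          congr 1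
          norm_num
          ring
  | succ k hk ih =>
    obtain ⟨C, hC, hC'⟩ := ih
    refine ⟨2 * C + 4, by linarith, ?_⟩
    intro f J η hJo hJc hη hf hlb δ hδ
    set g := iteratedDeriv k f with hg
    have hgc : ContinuousOn g J := contOn_itd hJo hf (by exact_mod_cast by omega : ((k:ℕ) : WithTop ℕ∞) ≤ ((k+1:ℕ) : WithTop ℕ∞) + 1)
    have hgd : DifferentiableOn ℝ g J := diffOn_itd hJo hf (by exact_mod_cast by omega : ((k:ℕ) : WithTop ℕ∞) < ((k+1:ℕ) : WithTop ℕ∞) + 1)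
    have hg'c : ContinuousOn (deriv g) J := by
      have := contOn_itd (m := k+1) hJo hf (by exact_mod_cast by omega : ((k+1:ℕ) : WithTop ℕ∞) ≤ ((k+1:ℕ) : WithTop ℕ∞) + 1)
      rwa [iteratedDeriv_succ] at this
    have hglb : ∀ x ∈ J, η ≤ |deriv g x| := by
      intro x hx
      have := hlb x hx
      rwa [iteratedDeriv_succ] at this
    have hx0 : (0:ℝ) < δ / η := div_pos hδ hη
    set r := (δ / η) ^ (1 / (((k+1:ℕ)):ℝ)) with hrdef
    have hr : 0 < r := Real.rpow_pos_of_pos hx0 _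
    set σ := η * r with hσdef
    have hσ : 0 < σ := mul_pos hη hr
    have hrk : r ^ (k+1) = δ / η := by
      rw [hrdef, ← Real.rpow_natCast ((δ/η) ^ (1 / (((k+1:ℕ)):ℝ))) (k+1),
        ← Real.rpow_mul hx0.le, one_div, inv_mul_cancel₀ (by positivity), Real.rpow_one]
    have hds : δ / σ = r ^ k := by
      have h1 : η * r ^ (k+1) = δ := by rw [hrk]; field_simp
      rw [hσdef, ← h1, pow_succ]
      field_simp
    have hdsr : (δ / σ) ^ (1 / (k:ℝ)) = r := by
      rw [hds, ← Real.rpow_natCast r k, ← Real.rpow_mul hr.le, mul_one_div,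
        div_self (by exact_mod_cast (by omega : k ≠ 0) : (k:ℝ) ≠ 0), Real.rpow_one]
    set A := {x ∈ J | g x < -σ} with hA
    set B := {x ∈ J | |g x| ≤ σ} with hB
    set Cs := {x ∈ J | σ < g x} with hCs
    have hAo : IsOpen A := by
      have : A = J ∩ g ⁻¹' Iio (-σ) := by ext x; simp [hA, Set.mem_sep_iff]
      rw [this]; exact hgc.isOpen_inter_preimage hJo isOpen_Iio
    have hCso : IsOpen Cs := by
      have : Cs = J ∩ g ⁻¹' Ioi σ := by ext x; simp [hCs, Set.mem_sep_iff]
      rw [this]; exact hgc.isOpen_inter_preimage hJo isOpen_Ioi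
    have hd := slope_dichotomy hJo hJc hη hgc hgd hg'c hglb
    have hAc : A.OrdConnected := by
      constructor
      intro x hx z hz y hy
      have hyJ : y ∈ J := hJc.out hx.1 hz.1 hy
      refine ⟨hyJ, ?_⟩
      rcases hd with hd | hd
      · have := hd y hyJ z hz.1 hy.2
        nlinarith [hz.2, mul_nonneg hη.le (sub_nonneg.2 hy.2)]
      · have := hd x hx.1 y hyJ hy.1
        nlinarith [hx.2, mul_nonneg hη.le (sub_nonneg.2 hy.1)]
    have hCsc : Cs.OrdConnected := by
      constructor
      intro x hx z hz y hy
      have hyJ : y ∈ J := hJc.out hx.1 hz.1 hy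
      refine ⟨hyJ, ?_⟩
      rcases hd with hd | hd
      · have := hd x hx.1 y hyJ hy.1
        nlinarith [hx.2, mul_nonneg hη.le (sub_nonneg.2 hy.1)]
      · have := hd y hyJ z hz.1 hy.2
        nlinarith [hz.2, mul_nonneg hη.le (sub_nonneg.2 hy.2)]
    have hfk : ContDiffOn ℝ ((k:ℕ) + 1) f J :=
      hf.of_le (by exact_mod_cast by omega : ((k:ℕ) : WithTop ℕ∞) + 1 ≤ ((k+1:ℕ) : WithTop ℕ∞) + 1)
    have hlbA : ∀ x ∈ A, σ ≤ |g x| := by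
      intro x hx
      have h2 := hx.2
      rcases abs_cases (g x) with ⟨he, _⟩ | ⟨he, _⟩ <;> linarith
    have hlbCs : ∀ x ∈ Cs, σ ≤ |g x| := by
      intro x hx
      have h2 := hx.2
      rcases abs_cases (g x) with ⟨he, _⟩ | ⟨he, _⟩ <;> linarith
    have hvA : volume {x ∈ A | |f x| < δ} ≤ ENNReal.ofReal (C * r) := by
      have := hC' f A σ hAo hAc hσ (hfk.mono (fun x hx => hx.1)) hlbA δ hδ
      rwa [hdsr] at this
    have hvC : volume {x ∈ Cs | |f x| < δ} ≤ ENNReal.ofReal (C * r) := by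
      have := hC' f Cs σ hCso hCsc hσ (hfk.mono (fun x hx => hx.1)) hlbCs δ hδ
      rwa [hdsr] at this
    have hvB : volume B ≤ ENNReal.ofReal (4 * σ / η) := small_set_vol hη hd
    have hvB' : volume B ≤ ENNReal.ofReal (4 * r) := by
      have : 4 * σ / η = 4 * r := by rw [hσdef]; field_simp
      rwa [this] at hvB
    have hcover : {x ∈ J | |f x| < δ} ⊆ ({x ∈ A | |f x| < δ} ∪ {x ∈ Cs | |f x| < δ}) ∪ B := by
      intro x hx
      rcases le_or_gt (|g x|) σ with h | h
      · exact Or.inr ⟨hx.1, h⟩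
      · rcases lt_abs.1 h with h' | h'
        · exact Or.inl (Or.inr ⟨⟨hx.1, h'⟩, hx.2⟩)
        · exact Or.inl (Or.inl ⟨⟨hx.1, by linarith⟩, hx.2⟩)
    calc volume {x ∈ J | |f x| < δ}
        ≤ volume (({x ∈ A | |f x| < δ} ∪ {x ∈ Cs | |f x| < δ}) ∪ B) := measure_mono hcover
      _ ≤ volume ({x ∈ A | |f x| < δ} ∪ {x ∈ Cs | |f x| < δ}) + volume B := measure_union_le _ _
      _ ≤ (volume {x ∈ A | |f x| < δ} + volume {x ∈ Cs | |f x| < δ}) + volume B :=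
          add_le_add_left (measure_union_le _ _) _
      _ ≤ (ENNReal.ofReal (C * r) + ENNReal.ofReal (C * r)) + ENNReal.ofReal (4 * r) :=
          add_le_add (add_le_add hvA hvC) hvB'
      _ = ENNReal.ofReal ((2 * C + 4) * ((δ / η) ^ (1 / (((k+1:ℕ)):ℝ)))) := by
          rw [← ENNReal.ofReal_add (by positivity) (by positivity),
            ← ENNReal.ofReal_add (by positivity) (by positivity)]
          congr 1
          rw [← hrdef]
          ring

theorem stmt15 (k : ℕ) (hk : 1 ≤ k) :
    ∃ C : ℝ, 0 < C ∧ ∀ (f : ℝ → ℝ) (I : Set ℝ) (η : ℝ), I.OrdConnected → 0 < η →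
      ContDiffOn ℝ (k + 1) f I →
      (∀ x ∈ I, η ≤ |iteratedDerivWithin k f I x|) →
      ∀ δ : ℝ, 0 < δ →
        volume {x ∈ I | |f x| < δ} ≤ ENNReal.ofReal (C * (δ / η) ^ (1 / (k:ℝ))) := by
  obtain ⟨C, hC, hP⟩ := openP k hk
  refine ⟨C, hC, ?_⟩
  intro f I η hIc hη hf hlb δ hδ
  set J := interior I with hJ
  have hJo : IsOpen J := isOpen_interior
  have hconv : Convex ℝ J := (convex_iff_ordConnected.2 hIc).interior
  have hJc : J.OrdConnected := convex_iff_ordConnected.1 hconv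
  have hfJ : ContDiffOn ℝ (k + 1) f J := hf.mono interior_subset
  have hkey : ∀ x ∈ J, iteratedDerivWithin k f I x = iteratedDeriv k f x := by
    intro x hx
    rw [← itdw_isOpen hJo hx]
    unfold iteratedDerivWithin
    congr 1
    have h3 : I ∩ J = J := inter_eq_self_of_subset_right interior_subset
    have h2 := iteratedFDerivWithin_inter (𝕜 := ℝ) (f := f) (s := I) (n := k) (x := x)
      (hJo.mem_nhds hx)
    rw [h3] at h2
    exact h2.symm
  have hlbJ : ∀ x ∈ J, η ≤ |iteratedDeriv k f x| := by
    intro x hx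
    rw [← hkey x hx]
    exact hlb x (interior_subset hx)
  have hsub : I \ J ⊆ {sInf I, sSup I} := by
    intro x hx
    by_contra hcon
    simp only [Set.mem_insert_iff, Set.mem_singleton_iff] at hcon
    push_neg at hcon
    obtain ⟨h1, h2⟩ := hcon
    have hyl : ∃ y ∈ I, y < x := by
      by_cases hbb : BddBelow I
      · have hle : sInf I ≤ x := csInf_le hbb hx.1
        exact exists_lt_of_csInf_lt ⟨x, hx.1⟩ (lt_of_le_of_ne hle (Ne.symm h1))
      · obtain ⟨y, hy, hy'⟩ := not_bddBelow_iff.1 hbb x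
        exact ⟨y, hy, hy'⟩
    have hyu : ∃ z ∈ I, x < z := by
      by_cases hba : BddAbove I
      · have hle : x ≤ sSup I := le_csSup hba hx.1
        exact exists_lt_of_lt_csSup ⟨x, hx.1⟩ (lt_of_le_of_ne hle h2)
      · obtain ⟨z, hz, hz'⟩ := not_bddAbove_iff.1 hba x
        exact ⟨z, hz, hz'⟩
    obtain ⟨y, hy, hyx⟩ := hyl
    obtain ⟨z, hz, hxz⟩ := hyu
    exact hx.2 (mem_interior.2 ⟨Ioo y z,
      fun w hw => hIc.out hy hz ⟨hw.1.le, hw.2.le⟩, isOpen_Ioo, hyx, hxz⟩)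
  have hnull : volume (I \ J) = 0 :=
    measure_mono_null (μ := volume) hsub (((Set.countable_singleton _).insert _).measure_zero volume)
  calc volume {x ∈ I | |f x| < δ}
      ≤ volume ({x ∈ J | |f x| < δ} ∪ (I \ J)) := by
        apply measure_mono
        intro x hx
        by_cases hxJ : x ∈ J
        · exact Or.inl ⟨hxJ, hx.2⟩
        · exact Or.inr ⟨hx.1, hxJ⟩
    _ ≤ volume {x ∈ J | |f x| < δ} + volume (I \ J) := measure_union_le _ _
    _ = volume {x ∈ J | |f x| < δ} := by rw [hnull, add_zero]
    _ ≤ ENNReal.ofReal (C * (δ / η) ^ (1 / (k:ℝ))) := hP f J η hJo hJc hη hfJ hlbJ δ hδ
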